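/- Let C ⊆ ℝ^d be a rational polyhedral cone and P = C ∩ {x : Σ x_i = 1} a rational polytope, and let m be a vertex of P with Σ m_i > 0. Then there is a smallest positive scalar λ such that λm has all integer coordinates, and for any decomposition λm = u₁ + ⋯ + u_t with each u_j a non-zero non-negative integer vector in C satisfying Σ (u_j)_i > 0 and each u_j a non-negative rational multiple of a point of P, all but possibly one of the u_j must be zero vectors — i.e., λm admits no non-trivial decomposition into two or more non-zero integer points of C. -/

import Mathlib

open Finset

lemma aux_gcd_nonneg {ι : Type*} (s : Finset ι) (a : ι → ℤ) : 0 ≤ s.gcd a := by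
  classical
  induction s using Finset.induction_on with
  | empty => simp
  | insert hx ih =>
    rw [Finset.gcd_insert]
    rw [← Int.coe_gcd]
    positivity

lemma aux_bezout {ι : Type*} (s : Finset ι) (a : ι → ℤ) :
    ∃ c : ι → ℤ, ∑ i ∈ s, c i * a i = s.gcd a := by
  classical
  induction s using Finset.induction_on with
  | empty => exact ⟨0, by simp⟩
  | @insert x s hx ih =>
    obtain ⟨c, hc⟩ := ih
    refine ⟨fun j => if j = x then Int.gcdA (a x) (s.gcd a)
      else Int.gcdB (a x) (s.gcd a) * c j, ?_⟩
    rw [Finset.sum_insert hx, Finset.gcd_insert, ← Int.coe_gcd, Int.gcd_eq_gcd_ab]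
    simp only [if_pos rfl]
    rw [Finset.sum_congr rfl (fun j hj => by
      rw [if_neg (by rintro rfl; exact hx hj)])]
    rw [show ∑ j ∈ s, Int.gcdB (a x) (s.gcd a) * c j * a j
        = Int.gcdB (a x) (s.gcd a) * ∑ j ∈ s, c j * a j by
      rw [Finset.mul_sum]; exact Finset.sum_congr rfl fun j _ => by ring]
    rw [hc]
    simp only [eq_self_iff_true, if_true]
    ring

lemma aux_map_mulVec {m n : Type*} [Fintype n] (M : Matrix m n ℚ) (v : n → ℚ) :
    (M.map (Rat.cast : ℚ → ℝ)).mulVec (fun j => (v j : ℝ)) =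
      fun i => ((M.mulVec v) i : ℝ) := by
  funext i
  simp [Matrix.mulVec, dotProduct]


/-- Let `C` be a rational polyhedral cone in ℝ^d (cut out by finitely
many rational halfspaces), let `P = C ∩ {x | ∑ x i = 1}`, and let `m₀` be a vertex
(extreme point) of `P` with `∑ m₀ i > 0`.  Then there is a smallest positive scalar
`lam` such that `lam • m₀` has all integer coordinates, and for any decomposition
`lam • m₀ = u₁ + ⋯ + u_t` where each `u j` lies in `C`, has non-negative integer
coordinates, and is a non-negative rational multiple of a point of `P`, all but at
most one of the `u j` are zero. -/
theorem vertex_smallest_multiple_indecomposable (d : ℕ)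
    (C : Set (Fin d → ℝ))
    (hCrat : ∃ (kk : ℕ) (A : Fin kk → Fin d → ℚ),
      C = {x : Fin d → ℝ | ∀ i, 0 ≤ ∑ jj, (A i jj : ℝ) * x jj})
    (P : Set (Fin d → ℝ))
    (hP : P = C ∩ {x : Fin d → ℝ | ∑ i, x i = 1})
    (m₀ : Fin d → ℝ) (hm₀ : m₀ ∈ Set.extremePoints ℝ P)
    (hm₀pos : 0 < ∑ i, m₀ i) :
    ∃ lam : ℝ, 0 < lam ∧ (∀ i, ∃ z : ℤ, lam * m₀ i = (z : ℝ)) ∧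
      (∀ μ : ℝ, 0 < μ → (∀ i, ∃ z : ℤ, μ * m₀ i = (z : ℝ)) → lam ≤ μ) ∧
      ∀ (t : ℕ) (u : Fin t → Fin d → ℝ),
        (∀ j, u j ∈ C) →
        (∀ j i, 0 ≤ u j i) →
        (∀ j i, ∃ z : ℤ, u j i = (z : ℝ)) →
        (∀ j, ∃ (c : ℝ) (p : Fin d → ℝ), 0 ≤ c ∧ (∃ r : ℚ, c = (r : ℝ)) ∧
          p ∈ P ∧ u j = c • p) →
        (lam • m₀ = ∑ j, u j) →
        Set.Subsingleton {j : Fin t | u j ≠ 0} := by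
  classical
  obtain ⟨kk, A, hC⟩ := hCrat
  subst hC; subst hP
  obtain ⟨hm₀P, hm₀ext⟩ := mem_extremePoints.mp hm₀
  obtain ⟨hm₀C, hm₀sum⟩ := hm₀P
  simp only [Set.mem_setOf_eq] at hm₀C hm₀sum
  set r : Fin kk → ℝ := fun i => ∑ jj, (A i jj : ℝ) * m₀ jj with hr_def
  -- key injectivity
  have key : ∀ y : Fin d → ℝ, (∀ i, r i = 0 → ∑ jj, (A i jj : ℝ) * y jj = 0) →
      (∑ jj, y jj = 0) → y = 0 := by
    intro y hy hysum
    by_contra hy0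
    set s : Fin kk → ℝ := fun i => ∑ jj, (A i jj : ℝ) * y jj with hs_def
    have hev : ∀ᶠ ε in nhdsWithin (0:ℝ) (Set.Ioi 0),
        ∀ i, 0 ≤ r i + ε * s i ∧ 0 ≤ r i - ε * s i := by
      rw [Filter.eventually_all]
      intro i
      rcases eq_or_lt_of_le (hm₀C i) with h0 | hpos
      · have hs0 : s i = 0 := hy i h0.symm
        have hr0 : r i = 0 := h0.symm
        filter_upwards with ε
        simp [hs0, hr0]
      · have hcont : Filter.Tendsto (fun ε : ℝ => r i + ε * s i) (nhds 0) (nhds (r i)) := by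
          have : Continuous (fun ε : ℝ => r i + ε * s i) := continuous_const.add (continuous_id.mul continuous_const)
          simpa using this.tendsto 0
        have hcont' : Filter.Tendsto (fun ε : ℝ => r i - ε * s i) (nhds 0) (nhds (r i)) := by
          have : Continuous (fun ε : ℝ => r i - ε * s i) := continuous_const.sub (continuous_id.mul continuous_const)
          simpa using this.tendsto 0
        have h1 := hcont.eventually (eventually_gt_nhds hpos)
        have h2 := hcont'.eventually (eventually_gt_nhds hpos)
        filter_upwards [nhdsWithin_le_nhds h1, nhdsWithin_le_nhds h2] with ε e1 e2
        exact ⟨le_of_lt e1, le_of_lt e2⟩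
    obtain ⟨ε, hεmem, hεpos⟩ :=
      (hev.and (eventually_mem_nhdsWithin)).exists
    rw [Set.mem_Ioi] at hεpos
    have hxp : (m₀ + ε • y) ∈
        ({x : Fin d → ℝ | ∀ i, 0 ≤ ∑ jj, (A i jj : ℝ) * x jj} ∩ {x | ∑ i, x i = 1}) := by
      constructor
      · intro i
        have : ∑ jj, (A i jj : ℝ) * (m₀ + ε • y) jj = r i + ε * s i := by
          simp only [Pi.add_apply, Pi.smul_apply, smul_eq_mul, mul_add, Finset.sum_add_distrib,
            hr_def, hs_def, Finset.mul_sum]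
          congr 1
          exact Finset.sum_congr rfl fun j _ => by ring
        rw [this]; exact (hεmem i).1
      · simp only [Set.mem_setOf_eq, Pi.add_apply, Pi.smul_apply, smul_eq_mul,
          Finset.sum_add_distrib, ← Finset.mul_sum, hm₀sum, hysum]
        ring
    have hxm : (m₀ - ε • y) ∈
        ({x : Fin d → ℝ | ∀ i, 0 ≤ ∑ jj, (A i jj : ℝ) * x jj} ∩ {x | ∑ i, x i = 1}) := by
      constructor
      · intro i
        have : ∑ jj, (A i jj : ℝ) * (m₀ - ε • y) jj = r i - ε * s i := by
          simp only [Pi.sub_apply, Pi.smul_apply, smul_eq_mul, mul_sub, Finset.sum_sub_distrib,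
            hr_def, hs_def, Finset.mul_sum]
          congr 1
          exact Finset.sum_congr rfl fun j _ => by ring
        rw [this]; exact (hεmem i).2
      · simp only [Set.mem_setOf_eq, Pi.sub_apply, Pi.smul_apply, smul_eq_mul,
          Finset.sum_sub_distrib, ← Finset.mul_sum, hm₀sum, hysum]
        ring
    have hseg : m₀ ∈ openSegment ℝ (m₀ + ε • y) (m₀ - ε • y) := by
      refine ⟨1/2, 1/2, by norm_num, by norm_num, by norm_num, ?_⟩
      funext i
      simp only [Pi.add_apply, Pi.sub_apply, Pi.smul_apply, smul_eq_mul]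
      ring
    have := (hm₀ext _ hxp _ hxm hseg).1
    have hεy : ε • y = 0 := by
      have : m₀ + ε • y = m₀ + 0 := by rw [add_zero]; exact this
      exact add_left_cancel this
    exact hy0 (by simpa [hεpos.ne'] using hεy)
  -- rationality of m₀
  set M : Matrix (Fin kk ⊕ Unit) (Fin d) ℚ :=
    Matrix.of (fun i j => Sum.elim (fun i' => if r i' = 0 then A i' j else 0) (fun _ => 1) i)
    with hM_def
  set Mr : Matrix (Fin kk ⊕ Unit) (Fin d) ℝ := M.map (Rat.cast : ℚ → ℝ) with hMr_def
  have hMinj : ∀ y : Fin d → ℝ, Mr.mulVec y = 0 → y = 0 := by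
    intro y hMy
    apply key y
    · intro i hri
      have := congrFun hMy (Sum.inl i)
      simpa [Matrix.mulVec, dotProduct, hMr_def, hM_def, hri] using this
    · have := congrFun hMy (Sum.inr ())
      simpa [Matrix.mulVec, dotProduct, hMr_def, hM_def] using this
  set N : Matrix (Fin d) (Fin d) ℚ := M.transpose * M with hN_def
  set Nr : Matrix (Fin d) (Fin d) ℝ := N.map (Rat.cast : ℚ → ℝ) with hNr_def
  have hNrMr : Nr = Mr.transpose * Mr := by
    ext i j
    simp [hNr_def, hN_def, hMr_def, Matrix.mul_apply]
  have hNinj : ∀ y : Fin d → ℝ, Nr.mulVec y = 0 → y = 0 := by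
    intro y hNy
    apply hMinj
    have hdot : dotProduct (Mr.mulVec y) (Mr.mulVec y) = 0 := by
      have : dotProduct y (Nr.mulVec y) = 0 := by rw [hNy]; simp
      rw [hNrMr, ← Matrix.mulVec_mulVec, Matrix.dotProduct_mulVec,
        Matrix.vecMul_transpose] at this
      exact this
    funext k
    have hsq : ∑ k', (Mr.mulVec y k') * (Mr.mulVec y k') = 0 := hdot
    have := (Finset.sum_eq_zero_iff_of_nonneg (fun k' _ => mul_self_nonneg _)).mp hsq
      k (Finset.mem_univ k)
    have := mul_self_eq_zero.mp this
    simpa using this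
  have hNdet : N.det ≠ 0 := by
    intro h0
    have hcast : (N.det : ℝ) = Nr.det := by
      rw [hNr_def]; exact RingHom.map_det (Rat.castHom ℝ) N
    have : Nr.det = 0 := by rw [← hcast, h0]; simp
    obtain ⟨v, hv0, hv⟩ := Matrix.exists_mulVec_eq_zero_iff.mpr this
    exact hv0 (hNinj v hv)
  set bq : Fin kk ⊕ Unit → ℚ := Sum.elim 0 1 with hbq_def
  set x₀ : Fin d → ℚ := N⁻¹.mulVec (M.transpose.mulVec bq) with hx₀_def
  have hNx₀ : N.mulVec x₀ = M.transpose.mulVec bq := by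
    rw [hx₀_def, Matrix.mulVec_mulVec, Matrix.mul_nonsing_inv N
      (isUnit_iff_ne_zero.mpr hNdet), Matrix.one_mulVec]
  have hMrm : Mr.mulVec m₀ = fun i => ((bq i : ℚ) : ℝ) := by
    funext i
    cases i with
    | inl i' =>
      rcases eq_or_ne (r i') 0 with hri | hri
      · simp only [Matrix.mulVec, dotProduct, hMr_def, hM_def, hbq_def,
          Matrix.map_apply, Matrix.of_apply, Sum.elim_inl, if_pos hri]
        push_cast
        simpa using hri
      · simp [Matrix.mulVec, dotProduct, hMr_def, hM_def, hbq_def, hri]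
    | inr u =>
      simp [Matrix.mulVec, dotProduct, hMr_def, hM_def, hbq_def, hm₀sum]
  have hMrT : Mr.transpose = M.transpose.map (Rat.cast : ℚ → ℝ) := by
    rw [hMr_def, Matrix.transpose_map]
  have hm₀N : Nr.mulVec m₀ = fun i => (((M.transpose.mulVec bq)) i : ℝ) := by
    rw [hNrMr, ← Matrix.mulVec_mulVec, hMrm, hMrT]
    exact aux_map_mulVec M.transpose bq
  have hx₀N : Nr.mulVec (fun j => (x₀ j : ℝ)) = fun i => (((M.transpose.mulVec bq)) i : ℝ) := by
    rw [hNr_def, aux_map_mulVec N x₀, hNx₀]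
  have hm₀rat : ∀ j, m₀ j = (x₀ j : ℝ) := by
    have hdiff : Nr.mulVec (m₀ - fun j => (x₀ j : ℝ)) = 0 := by
      rw [Matrix.mulVec_sub, hm₀N, hx₀N]; simp
    have h := hNinj _ hdiff
    intro j
    have := congrFun h j
    simpa [sub_eq_zero] using this
  -- common denominator and gcd
  have hx₀sum : ∑ i, x₀ i = 1 := by
    have : ((∑ i, x₀ i : ℚ) : ℝ) = ((1 : ℚ) : ℝ) := by
      push_cast
      rw [← hm₀sum]
      exact Finset.sum_congr rfl fun i _ => (hm₀rat i).symm
    exact_mod_cast this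
  set D : ℕ := ∏ i, (x₀ i).den with hD_def
  have hDpos : 0 < D := Finset.prod_pos fun i _ => (x₀ i).den_pos
  set a : Fin d → ℤ := fun i => (x₀ i).num * ((D / (x₀ i).den : ℕ) : ℤ) with ha_def
  have hdvd : ∀ i, (x₀ i).den ∣ D := fun i => Finset.dvd_prod_of_mem _ (Finset.mem_univ i)
  have haD : ∀ i, (x₀ i) * (D : ℚ) = (a i : ℚ) := by
    intro i
    have h2 : (D : ℚ) = ((x₀ i).den : ℚ) * ((D / (x₀ i).den : ℕ) : ℚ) := by
      exact_mod_cast (congrArg (Nat.cast : ℕ → ℚ) (Nat.mul_div_cancel' (hdvd i))).symm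
    rw [h2, ← mul_assoc, Rat.mul_den_eq_num, ha_def]
    push_cast
    rw [Nat.cast_div (hdvd i) (by exact_mod_cast (x₀ i).den_pos.ne'),
      Int.cast_div_charZero (Int.natCast_dvd_natCast.mpr (hdvd i))]
    push_cast
    ring
  set g : ℤ := Finset.univ.gcd a with hg_def
  have hgnn : 0 ≤ g := aux_gcd_nonneg _ _
  have hgne : g ≠ 0 := by
    intro h0
    have hall := Finset.gcd_eq_zero_iff.mp (hg_def ▸ h0)
    have hex : ∃ i, x₀ i ≠ 0 := by
      by_contra hno
      push_neg at hno
      rw [Finset.sum_eq_zero (fun i _ => hno i)] at hx₀sum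
      exact one_ne_zero hx₀sum.symm
    obtain ⟨i, hi⟩ := hex
    have hz : (x₀ i) * (D : ℚ) = 0 := by rw [haD i, hall i (Finset.mem_univ i)]; simp
    have hD0 : (D : ℚ) ≠ 0 := Nat.cast_ne_zero.mpr hDpos.ne'
    exact hi (by rcases mul_eq_zero.mp hz with h | h; exact h; exact absurd h hD0)
  have hgpos : 0 < g := lt_of_le_of_ne hgnn (Ne.symm hgne)
  have hgR : (0:ℝ) < (g:ℝ) := by exact_mod_cast hgpos
  have hDR : (0:ℝ) < (D:ℝ) := by exact_mod_cast hDpos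
  set lam : ℝ := (D : ℝ) / (g : ℝ) with hlam_def
  have hlampos : 0 < lam := by positivity
  have hcastaD : ∀ i, (x₀ i : ℝ) * (D : ℝ) = (a i : ℝ) := by
    intro i
    exact_mod_cast congrArg (Rat.cast : ℚ → ℝ) (haD i)
  have hint : ∀ i, ∃ z : ℤ, lam * m₀ i = (z : ℝ) := by
    intro i
    obtain ⟨e, he⟩ := Finset.gcd_dvd (f := a) (Finset.mem_univ i)
    refine ⟨e, ?_⟩
    rw [hm₀rat i, hlam_def]
    have h1 : (D : ℝ) / (g : ℝ) * (x₀ i : ℝ) = (a i : ℝ) / (g : ℝ) := by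
      rw [div_mul_eq_mul_div, mul_comm, hcastaD]
    rw [h1, he]
    push_cast
    rw [mul_comm, mul_div_assoc, div_self hgR.ne', mul_one]
  have hmin : ∀ μ : ℝ, 0 < μ → (∀ i, ∃ z : ℤ, μ * m₀ i = (z : ℝ)) → lam ≤ μ := by
    intro μ hμpos hμint
    obtain ⟨c, hc⟩ := aux_bezout (Finset.univ : Finset (Fin d)) a
    choose z hz using hμint
    have hza : ∀ i, μ * (a i : ℝ) = (z i : ℝ) * (D : ℝ) := by
      intro i
      rw [← hcastaD i, ← mul_assoc, show μ * (x₀ i : ℝ) = (z i : ℝ) by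
        rw [← hm₀rat i]; exact hz i]
    have hgcast : (g : ℝ) = ∑ i, (c i : ℝ) * (a i : ℝ) := by
      rw [hg_def]
      exact_mod_cast congrArg (Int.cast : ℤ → ℝ) hc.symm
    have hμg : μ * (g : ℝ) = ((∑ i, c i * z i : ℤ) : ℝ) * (D : ℝ) := by
      rw [hgcast, Finset.mul_sum]
      push_cast
      rw [Finset.sum_mul]
      refine Finset.sum_congr rfl fun i _ => ?_
      calc μ * ((c i : ℝ) * (a i : ℝ)) = (c i : ℝ) * (μ * (a i : ℝ)) := by ring
      _ = (c i : ℝ) * ((z i : ℝ) * (D : ℝ)) := by rw [hza i]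
      _ = (c i : ℝ) * (z i : ℝ) * (D : ℝ) := by ring
    have hwpos : 0 < (∑ i, c i * z i : ℤ) := by
      by_contra hw
      push_neg at hw
      have hwR : ((∑ i, c i * z i : ℤ) : ℝ) ≤ 0 := by exact_mod_cast hw
      nlinarith
    have hw1 : (1 : ℝ) ≤ ((∑ i, c i * z i : ℤ) : ℝ) := by exact_mod_cast hwpos
    rw [hlam_def, div_le_iff₀ hgR]
    nlinarith
  clear_value r M Mr N Nr bq x₀ D a g lam
  clear hMinj hNinj hNdet hNx₀ hMrm hMrT hm₀N hx₀N hNrMr hx₀sum haD hdvd key hM_def hMr_def hN_def hNr_def hbq_def hx₀_def hD_def ha_def hg_def hgne hgnn hDpos hgpos hcastaD hlam_def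
  have hconv : Convex ℝ ({x : Fin d → ℝ | ∀ i, 0 ≤ ∑ jj, (A i jj : ℝ) * x jj}
      ∩ {x | ∑ i, x i = 1}) := by
    rintro x ⟨hx1, hx2⟩ y ⟨hy1, hy2⟩ α β hα hβ hαβ
    simp only [Set.mem_setOf_eq] at hx1 hx2 hy1 hy2
    constructor
    · intro i
      have hexp : ∑ jj, (A i jj : ℝ) * (α • x + β • y) jj
          = α * ∑ jj, (A i jj : ℝ) * x jj + β * ∑ jj, (A i jj : ℝ) * y jj := by
        simp only [Pi.add_apply, Pi.smul_apply, smul_eq_mul, Finset.mul_sum, mul_add,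
          Finset.sum_add_distrib]
        congr 1 <;> exact Finset.sum_congr rfl fun j _ => by ring
      rw [hexp]
      exact add_nonneg (mul_nonneg hα (hx1 i)) (mul_nonneg hβ (hy1 i))
    · simp only [Set.mem_setOf_eq, Pi.add_apply, Pi.smul_apply, smul_eq_mul,
        Finset.sum_add_distrib, ← Finset.mul_sum, hx2, hy2]
      simpa using hαβ
  refine ⟨lam, hlampos, hint, hmin, ?_⟩
  intro t u huC hunn huint hudec husum
  choose c p hcnn hcrat hpP hup using hudec
  intro j₁ hj₁ j₂ hj₂
  by_contra hne
  have hpsum : ∀ j, ∑ i, p j i = 1 := fun j => (hpP j).2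
  have husumc : ∀ j, ∑ i, u j i = c j := by
    intro j
    rw [hup j]
    simp only [Pi.smul_apply, smul_eq_mul, ← Finset.mul_sum, hpsum j, mul_one]
  have hlam_eq : lam = ∑ j, c j := by
    have h1 : ∑ i, (lam • m₀) i = lam := by
      simp only [Pi.smul_apply, smul_eq_mul, ← Finset.mul_sum, hm₀sum, mul_one]
    rw [husum] at h1
    rw [← h1]
    simp only [Finset.sum_apply]
    rw [Finset.sum_comm]
    exact Finset.sum_congr rfl fun j _ => husumc j
  have hcj : ∀ j, u j ≠ 0 → 0 < c j := by
    intro j hj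
    obtain ⟨i0, hi0⟩ := Function.ne_iff.mp hj
    have hpos : 0 < ∑ i, u j i :=
      Finset.sum_pos' (fun i _ => hunn j i)
        ⟨i0, Finset.mem_univ _, lt_of_le_of_ne (hunn j i0) (Ne.symm hi0)⟩
    rwa [husumc j] at hpos
  have hc1 : 0 < c j₁ := hcj j₁ hj₁
  have hc2 : 0 < c j₂ := hcj j₂ hj₂
  have herase : ∑ j ∈ Finset.univ.erase j₁, c j = lam - c j₁ := by
    have h := Finset.sum_erase_add Finset.univ c (Finset.mem_univ j₁)
    rw [← hlam_eq] at h
    linarith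
  have hrem_pos : 0 < lam - c j₁ := by
    have h := Finset.single_le_sum (f := c) (fun j _ => hcnn j)
      (Finset.mem_erase.mpr ⟨fun h => hne (h.symm), Finset.mem_univ j₂⟩)
    rw [herase] at h
    linarith
  set q0 : Fin d → ℝ := (lam - c j₁)⁻¹ • ∑ j ∈ Finset.univ.erase j₁, u j with hq0_def
  have hq0P : q0 ∈ ({x : Fin d → ℝ | ∀ i, 0 ≤ ∑ jj, (A i jj : ℝ) * x jj}
      ∩ {x | ∑ i, x i = 1}) := by
    have hq0eq : q0 = ∑ j ∈ Finset.univ.erase j₁, ((lam - c j₁)⁻¹ * c j) • p j := by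
      rw [hq0_def, Finset.smul_sum]
      exact Finset.sum_congr rfl fun j _ => by rw [hup j, smul_smul]
    rw [hq0eq]
    exact hconv.sum_mem
      (fun j _ => mul_nonneg (inv_nonneg.mpr hrem_pos.le) (hcnn j))
      (by rw [← Finset.mul_sum, herase, inv_mul_cancel₀ hrem_pos.ne'])
      (fun j _ => hpP j)
  have hdecomp : lam • m₀ = c j₁ • p j₁ + (lam - c j₁) • q0 := by
    rw [hq0_def, smul_inv_smul₀ hrem_pos.ne', husum, ← hup j₁,
      ← Finset.sum_erase_add Finset.univ u (Finset.mem_univ j₁)]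
    rw [add_comm]
  have hseg : m₀ ∈ openSegment ℝ (p j₁) q0 := by
    refine ⟨c j₁ / lam, (lam - c j₁) / lam, div_pos hc1 hlampos, div_pos hrem_pos hlampos,
      by rw [← add_div, add_sub_cancel, div_self hlampos.ne'], ?_⟩
    have hm : m₀ = lam⁻¹ • (lam • m₀) := by rw [inv_smul_smul₀ hlampos.ne']
    rw [hm, hdecomp, smul_add, smul_smul, smul_smul, div_eq_inv_mul, div_eq_inv_mul]
    simp only [hq0_def, smul_smul]
    congr 2
    ring
  have hpm : p j₁ = m₀ := (hm₀ext _ (hpP j₁) _ hq0P hseg).1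
  have hle : lam ≤ c j₁ := by
    refine hmin (c j₁) hc1 (fun i => ?_)
    obtain ⟨z, hz⟩ := huint j₁ i
    refine ⟨z, ?_⟩
    rw [← hz, hup j₁, hpm]
    simp
  linarith
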